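/- Let n ≥ 2 and let f : Fin n → ℤ satisfy ∑_i f(i) = 0. Set N = ∑_i max(f(i), 0). For a subset S ⊆ Fin n, let a = ∑_{i ∈ S} max(f(i), 0) and b = ∑_{i ∈ S} max(−f(i), 0). Then ∑_{i ∈ S, j ∉ S} max(−f(i)·f(j), 0) = a·(N − b) + b·(N − a). -/
import Mathlib

lemma key_max (x y : ℤ) :
    max (-(x * y)) 0 = max x 0 * max (-y) 0 + max (-x) 0 * max y 0 := by
  simp only [max_def]
  split_ifs <;> nlinarith

theorem statement_11 (n : ℕ) (hn : 2 ≤ n) (f : Fin n → ℤ)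
    (hf : ∑ i, f i = 0) (S : Finset (Fin n)) :
    ∑ i ∈ S, ∑ j ∈ Sᶜ, max (-(f i * f j)) 0 =
      (∑ i ∈ S, max (f i) 0) * ((∑ i, max (f i) 0) - ∑ i ∈ S, max (-f i) 0) +
      (∑ i ∈ S, max (-f i) 0) * ((∑ i, max (f i) 0) - ∑ i ∈ S, max (f i) 0) := by
  have hneg : (∑ i, max (-f i) 0) = ∑ i, max (f i) 0 := by
    have : ∑ i, (max (f i) 0 - max (-f i) 0) = ∑ i, f i := by
      apply Finset.sum_congr rfl; intro i _
      rcases le_total (f i) 0 with h | h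
      · rw [max_eq_right h, max_eq_left (by omega)]; ring
      · rw [max_eq_left h, max_eq_right (by omega)]; ring
    rw [Finset.sum_sub_distrib, hf] at this; omega
  have hsplit : ∀ g : Fin n → ℤ, (∑ j ∈ Sᶜ, g j) = (∑ j, g j) - ∑ j ∈ S, g j := by
    intro g
    rw [eq_sub_iff_add_eq, Finset.sum_compl_add_sum]
  calc ∑ i ∈ S, ∑ j ∈ Sᶜ, max (-(f i * f j)) 0
      = ∑ i ∈ S, (max (f i) 0 * ∑ j ∈ Sᶜ, max (-f j) 0
          + max (-f i) 0 * ∑ j ∈ Sᶜ, max (f j) 0) := by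
        apply Finset.sum_congr rfl; intro i _
        rw [Finset.mul_sum, Finset.mul_sum, ← Finset.sum_add_distrib]
        exact Finset.sum_congr rfl fun j _ => key_max (f i) (f j)
    _ = _ := by
        rw [Finset.sum_add_distrib, ← Finset.sum_mul, ← Finset.sum_mul,
          hsplit (fun j => max (-f j) 0), hsplit (fun j => max (f j) 0), hneg]
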